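/- Let 𝔯 ⊆ [0,1] ∩ ℚ be a finite set with 0, 1 ∈ 𝔯, let Φ := Φ(𝔯), and let 𝒩₁ and 𝒩₂ be finite sets of positive integers. Let 𝔯₁ := {r − Σ_{n∈𝒩₁} m_n/(n+1) : r ∈ 𝔯, m_n nonnegative integers} ∩ [0,1], so that Γ(𝒩₁, Φ) = Φ(𝔯₁). Then Γ(𝒩₁ ∪ 𝒩₂, Φ) = Γ(𝒩₂, Φ(𝔯₁)), i.e. Γ(𝒩₁ ∪ 𝒩₂, Φ) = Γ(𝒩₂, Γ(𝒩₁, Φ)). -/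

import Mathlib

open scoped BigOperators

/-- The hyperstandard set `Φ(𝔯) = {1 - r/l | r ∈ 𝔯, l ∈ ℤ_{>0}} ∩ [0,1]` associated to a
set of rationals `𝔯`. -/
def Phi (R : Set ℚ) : Set ℝ :=
  {x : ℝ | (∃ r ∈ R, ∃ l : ℕ, 0 < l ∧ x = 1 - (r : ℝ) / l) ∧ 0 ≤ x ∧ x ≤ 1}

/-- The set `Γ(𝒩, Φ(𝔯)) = {1 - r/l + (1/l)·Σ_{n∈𝒩} m_n/(n+1)} ∩ [0,1]`. -/
def Gamma (N : Finset ℕ) (R : Set ℚ) : Set ℝ :=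
  {x : ℝ | (∃ r ∈ R, ∃ l : ℕ, 0 < l ∧ ∃ m : ℕ → ℕ,
      x = 1 - (r : ℝ) / l + (1 / (l : ℝ)) * ∑ n ∈ N, (m n : ℝ) / ((n : ℝ) + 1)) ∧
    0 ≤ x ∧ x ≤ 1}

/-- With `𝔯₁ := {r − Σ_{n∈𝒩₁} m_n/(n+1) : r ∈ 𝔯, m_n ∈ ℤ_{≥0}} ∩ [0,1]`
(so that `Γ(𝒩₁, Φ) = Φ(𝔯₁)`), one has `Γ(𝒩₁ ∪ 𝒩₂, Φ) = Γ(𝒩₂, Φ(𝔯₁))`, i.e.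
`Γ(𝒩₁ ∪ 𝒩₂, Φ) = Γ(𝒩₂, Γ(𝒩₁, Φ))`. -/
theorem stmt5 (R : Set ℚ) (hRfin : R.Finite) (hRsub : R ⊆ Set.Icc 0 1)
    (h0R : (0 : ℚ) ∈ R) (h1R : (1 : ℚ) ∈ R)
    (N₁ N₂ : Finset ℕ) (hN₁ : ∀ n ∈ N₁, 0 < n) (hN₂ : ∀ n ∈ N₂, 0 < n)
    (R₁ : Set ℚ)
    (hR₁ : R₁ = {x : ℚ | (∃ r ∈ R, ∃ m : ℕ → ℕ,
      x = r - ∑ n ∈ N₁, (m n : ℚ) / ((n : ℚ) + 1)) ∧ 0 ≤ x ∧ x ≤ 1}) :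
    Gamma (N₁ ∪ N₂) R = Gamma N₂ R₁ := by

  subst hR₁
  ext x
  simp only [Gamma, Set.mem_setOf_eq]
  constructor
  · rintro ⟨⟨r, hr, l, hl, m, hx⟩, hx0, hx1⟩
    set m₁ : ℕ → ℕ := fun n => if n ∈ N₂ then 0 else m n with hm₁
    set A : ℝ := ∑ n ∈ N₁, (m₁ n : ℝ) / ((n : ℝ) + 1) with hA
    set B : ℝ := ∑ n ∈ N₂, (m n : ℝ) / ((n : ℝ) + 1) with hB
    have split : ∑ n ∈ N₁ ∪ N₂, (m n : ℝ) / ((n : ℝ) + 1) = A + B := by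
      rw [← Finset.sdiff_union_self_eq_union,
        Finset.sum_union (Finset.sdiff_disjoint)]
      congr 1
      rw [hA, ← Finset.sum_subset (Finset.sdiff_subset : N₁ \ N₂ ⊆ N₁)
        (fun n hn hns => by
          have hn2 : n ∈ N₂ := by
            by_contra h; exact hns (Finset.mem_sdiff.mpr ⟨hn, h⟩)
          simp [hm₁, hn2])]
      exact Finset.sum_congr rfl fun n hn => by
        simp [hm₁, (Finset.mem_sdiff.mp hn).2]
    rw [split] at hx
    set r' : ℚ := r - ∑ n ∈ N₁, (m₁ n : ℚ) / ((n : ℚ) + 1) with hr'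
    have hcast : (r' : ℝ) = (r : ℝ) - A := by
      rw [hr', hA]; push_cast; ring
    have hl' : (0 : ℝ) < l := by exact_mod_cast hl
    have hAnn : 0 ≤ A := Finset.sum_nonneg fun n _ => by positivity
    have hBnn : 0 ≤ B := Finset.sum_nonneg fun n _ => by positivity
    have hAB : A + B ≤ (r : ℝ) := by
      rw [hx] at hx1
      have hrl : (r : ℝ) / l = (1 / l) * r := by ring
      rw [hrl] at hx1
      have h1l : (0 : ℝ) < 1 / l := by positivity
      have h2 : (1 / (l : ℝ)) * (A + B) ≤ (1 / (l : ℝ)) * r := by linarith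
      exact (mul_le_mul_iff_of_pos_left h1l).mp h2
    have h0q : 0 ≤ r' := by
      have : (0 : ℝ) ≤ (r' : ℝ) := by rw [hcast]; linarith
      exact_mod_cast this
    have h1q : r' ≤ 1 := by
      have hr1 : (r : ℝ) ≤ 1 := by exact_mod_cast (hRsub hr).2
      have : (r' : ℝ) ≤ 1 := by rw [hcast]; linarith
      exact_mod_cast this
    refine ⟨⟨r', ⟨⟨r, hr, m₁, hr'⟩, h0q, h1q⟩, l, hl, m, ?_⟩, hx0, hx1⟩
    rw [hx, hcast]; ring
  · rintro ⟨⟨r₁, ⟨⟨r, hr, m₁, hr₁⟩, h0, h1⟩, l, hl, m₂, hx⟩, hx0, hx1⟩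
    set m : ℕ → ℕ := fun n =>
      (if n ∈ N₁ then m₁ n else 0) + (if n ∈ N₂ then m₂ n else 0) with hm
    have split : ∑ n ∈ N₁ ∪ N₂, (m n : ℝ) / ((n : ℝ) + 1)
        = ∑ n ∈ N₁, (m₁ n : ℝ) / ((n : ℝ) + 1)
          + ∑ n ∈ N₂, (m₂ n : ℝ) / ((n : ℝ) + 1) := by
      have hterm : ∀ n, (m n : ℝ) / ((n : ℝ) + 1)
          = (if n ∈ N₁ then (m₁ n : ℝ) / ((n : ℝ) + 1) else 0)
            + (if n ∈ N₂ then (m₂ n : ℝ) / ((n : ℝ) + 1) else 0) := by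
        intro n
        by_cases h1' : n ∈ N₁ <;> by_cases h2' : n ∈ N₂ <;>
          simp only [hm, h1', h2', if_true, if_false] <;> push_cast <;> ring
      rw [Finset.sum_congr rfl fun n _ => hterm n, Finset.sum_add_distrib]
      congr 1
      · rw [← Finset.sum_subset (Finset.subset_union_left : N₁ ⊆ N₁ ∪ N₂)
          (fun n _ hn => if_neg hn)]
        exact Finset.sum_congr rfl fun n hn => if_pos hn
      · rw [← Finset.sum_subset (Finset.subset_union_right : N₂ ⊆ N₁ ∪ N₂)
          (fun n _ hn => if_neg hn)]
        exact Finset.sum_congr rfl fun n hn => if_pos hn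
    have hc : (r₁ : ℝ) = (r : ℝ) - ∑ n ∈ N₁, (m₁ n : ℝ) / ((n : ℝ) + 1) := by
      rw [hr₁]; push_cast; ring
    refine ⟨⟨r, hr, l, hl, m, ?_⟩, hx0, hx1⟩
    rw [hx, split, hc]; ring
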